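/- Let p be an odd prime, let a ≥ 1 be an integer, and let b = ⌈a/3⌉. Then the map ψ sending the residue class of 1 + p^b x in (ℤ/p^aℤ)ˣ to exp(2πi (2 p^b x − p^{2b} x²) / p^a) ∈ ℂˣ is well defined on the subgroup H = {u ∈ (ℤ/p^aℤ)ˣ : u ≡ 1 (mod p^b)} (i.e., if x ≡ x′ (mod p^{a−b}) then the two values agree) and is a group homomorphism: ψ((1+p^b x)(1+p^b y)) = ψ(1+p^b x)·ψ(1+p^b y) for all integers x, y. -/

import Mathlib

open Complex

private lemma exp_cong (p a : ℕ) (hp : 0 < p) (u v : ℤ) (h : (p : ℤ) ^ a ∣ u - v) :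
    Complex.exp (2 * (Real.pi : ℂ) * Complex.I * (u : ℂ) / (p : ℂ) ^ a) =
    Complex.exp (2 * (Real.pi : ℂ) * Complex.I * (v : ℂ) / (p : ℂ) ^ a) := by
  obtain ⟨k, hk⟩ := h
  have hpa : ((p : ℂ)) ^ a ≠ 0 := pow_ne_zero _ (Nat.cast_ne_zero.mpr hp.ne')
  have hu : (u : ℂ) = (v : ℂ) + (p : ℂ) ^ a * (k : ℂ) := by
    have : (u : ℤ) = v + (p : ℤ) ^ a * k := by linarith
    exact_mod_cast congrArg (Int.cast : ℤ → ℂ) this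
  have : 2 * (Real.pi : ℂ) * Complex.I * (u : ℂ) / (p : ℂ) ^ a =
      2 * (Real.pi : ℂ) * Complex.I * (v : ℂ) / (p : ℂ) ^ a + (k : ℂ) * (2 * Real.pi * Complex.I) := by
    rw [hu]; field_simp
  rw [this, Complex.exp_add, Complex.exp_int_mul_two_pi_mul_I, mul_one]

theorem stmt5 (p : ℕ) (hp : p.Prime) (hp2 : p ≠ 2) (a : ℕ) (ha : 1 ≤ a)
    (b : ℕ) (hb : (b : ℤ) = ⌈(a : ℚ) / 3⌉)
    (ψ : ℤ → ℂ)
    (hψ : ∀ x : ℤ, ψ x = Complex.exp (2 * (Real.pi : ℂ) * Complex.I *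
        (2 * (p : ℂ) ^ b * (x : ℂ) - (p : ℂ) ^ (2 * b) * (x : ℂ) ^ 2) / (p : ℂ) ^ a)) :
    (∀ x x' : ℤ, x ≡ x' [ZMOD ((p : ℤ) ^ (a - b))] → ψ x = ψ x') ∧
    (∀ x y : ℤ, ψ (x + y + (p : ℤ) ^ b * x * y) = ψ x * ψ y) := by
  set g : ℤ → ℤ := fun x => 2 * (p : ℤ) ^ b * x - (p : ℤ) ^ (2 * b) * x ^ 2 with hg
  have hψ' : ∀ x : ℤ, ψ x = Complex.exp (2 * (Real.pi : ℂ) * Complex.I * ((g x : ℤ) : ℂ) / (p : ℂ) ^ a) := by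
    intro x
    rw [hψ]
    congr 2
    push_cast [hg]
    ring
  have hba : b ≤ a := by
    have h1 : ((b : ℤ)) ≤ (a : ℤ) := by
      rw [hb]
      refine Int.ceil_le.mpr ?_
      rw [Int.cast_natCast]
      have : (0:ℚ) ≤ (a:ℚ) := by positivity
      linarith
    exact_mod_cast h1
  have h3b : a ≤ 3 * b := by
    have h1 : (a : ℚ) / 3 ≤ ((b : ℤ) : ℚ) := by rw [hb]; exact Int.le_ceil _
    have : (a : ℚ) ≤ 3 * (b : ℚ) := by push_cast at h1 ⊢; linarith
    exact_mod_cast this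
  have hP : (p : ℤ) ^ b * (p : ℤ) ^ (a - b) = (p : ℤ) ^ a := by
    rw [← pow_add]; congr 1; omega
  have hP2 : (p : ℤ) ^ (2 * b) = (p : ℤ) ^ b * (p : ℤ) ^ b := by
    rw [two_mul, pow_add]
  have hP3 : (p : ℤ) ^ a * (p : ℤ) ^ (3 * b - a) = (p : ℤ) ^ b * ((p : ℤ) ^ b * (p : ℤ) ^ b) := by
    rw [← pow_add, ← pow_add, ← pow_add]; congr 1; omega
  constructor
  · intro x x' h
    obtain ⟨k, hk⟩ := (Int.ModEq.dvd h.symm)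
    have hx : x = x' + (p : ℤ) ^ (a - b) * k := by linarith
    rw [hψ' x, hψ' x']
    apply exp_cong p a hp.pos
    refine ⟨k * (2 - (p : ℤ) ^ b * (2 * x' + (p : ℤ) ^ (a - b) * k)), ?_⟩
    subst hx
    simp only [hg, hP2]
    rw [← hP]
    ring
  · intro x y
    rw [hψ' (x + y + (p : ℤ) ^ b * x * y), hψ' x, hψ' y, ← Complex.exp_add]
    have : 2 * (Real.pi : ℂ) * Complex.I * ((g x : ℤ) : ℂ) / (p : ℂ) ^ a +
        2 * (Real.pi : ℂ) * Complex.I * ((g y : ℤ) : ℂ) / (p : ℂ) ^ a =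
        2 * (Real.pi : ℂ) * Complex.I * (((g x + g y : ℤ)) : ℂ) / (p : ℂ) ^ a := by
      push_cast; ring
    rw [this]
    apply exp_cong p a hp.pos
    refine ⟨-((p : ℤ) ^ (3 * b - a) * (2 * x * y * (x + y) + (p : ℤ) ^ b * x ^ 2 * y ^ 2)), ?_⟩
    have key : g (x + y + (p : ℤ) ^ b * x * y) - (g x + g y) =
        -(((p : ℤ) ^ b * ((p : ℤ) ^ b * (p : ℤ) ^ b)) *
          (2 * x * y * (x + y) + (p : ℤ) ^ b * x ^ 2 * y ^ 2)) := by
      simp only [hg, hP2]; ring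
    rw [key, ← hP3]; ring
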